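/- arXiv:2306.16255 — 3 statements merged into one kernel-verified Lean document; each statement's English description precedes it below -/
import Mathlib

section
/- A univariate real polynomial p of even degree is nonnegative on all of ℝ if and only if it is a sum of squares of real polynomials. -/
open Polynomial

/-- If `s` is nonnegative, nonzero, and `s*t` is nonnegative, then `t` is nonnegative. -/
private lemma nonneg_quot (s t : Polynomial ℝ) (hs0 : s ≠ 0) (hs : ∀ x : ℝ, 0 ≤ s.eval x)
    (h : ∀ x : ℝ, 0 ≤ (s * t).eval x) : ∀ x : ℝ, 0 ≤ t.eval x := by
  have hcl : IsClosed {x : ℝ | 0 ≤ t.eval x} :=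
    isClosed_le continuous_const t.continuous
  have hsub : {x : ℝ | s.IsRoot x}ᶜ ⊆ {x : ℝ | 0 ≤ t.eval x} := by
    intro x hx
    have hspos : 0 < s.eval x := lt_of_le_of_ne (hs x) (Ne.symm hx)
    have hst := h x
    rw [eval_mul] at hst
    exact nonneg_of_mul_nonneg_right hst hspos
  have hdense : Dense ({x : ℝ | s.IsRoot x}ᶜ) :=
    ((finite_setOf_isRoot hs0).countable).dense_compl ℝ
  have huniv : {x : ℝ | 0 ≤ t.eval x} = Set.univ := by
    have := (hdense.mono hsub).closure_eq
    rw [hcl.closure_eq] at this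
    exact this
  intro x
  have : x ∈ {x : ℝ | 0 ≤ t.eval x} := huniv ▸ Set.mem_univ x
  exact this

private lemma aux_sos : ∀ n : ℕ, ∀ p : Polynomial ℝ, p.natDegree = n → Even n →
    (∀ x : ℝ, 0 ≤ p.eval x) → ∃ q r : Polynomial ℝ, p = q ^ 2 + r ^ 2 := by
  intro n
  induction n using Nat.strong_induction_on with
  | _ n ih =>
  intro p hdeg heven hpos
  by_cases hp0 : p = 0
  · exact ⟨0, 0, by simp [hp0]⟩
  rcases Nat.eq_zero_or_pos n with h0 | hposn
  · subst h0
    obtain ⟨c, rfl⟩ := (natDegree_eq_zero).mp hdeg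
    have hc : 0 ≤ c := by simpa using hpos 0
    refine ⟨C (Real.sqrt c), 0, ?_⟩
    rw [← map_pow, Real.sq_sqrt hc]
    ring
  have h2 : 2 ≤ n := by
    rcases heven with ⟨k, hk⟩; omega
  -- find a nonnegative quadratic sum-of-two-squares divisor s of p
  have key : ∃ s : Polynomial ℝ, s ∣ p ∧ s.natDegree = 2 ∧ (∀ x : ℝ, 0 ≤ s.eval x) ∧
      ∃ u v : Polynomial ℝ, s = u ^ 2 + v ^ 2 := by
    by_cases hroot : ∃ a : ℝ, p.eval a = 0
    · -- real root case: (X - a)^2 divides p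
      obtain ⟨a, ha⟩ := hroot
      obtain ⟨q, hq⟩ := (dvd_iff_isRoot).mpr ha
      -- derivative vanishes at a since a is a global minimum
      have hmin : IsLocalMin (fun x => p.eval x) a := by
        apply Filter.Eventually.of_forall
        intro x
        simp only [ha]
        exact hpos x
      have hderiv : p.derivative.eval a = 0 := by
        have := hmin.deriv_eq_zero
        rwa [Polynomial.deriv] at this
      have hqa : q.eval a = 0 := by
        have hd : p.derivative = q + (X - C a) * q.derivative := by
          rw [hq, derivative_mul]
          simp [derivative_X_sub_C]
        rw [hd] at hderiv
        simpa using hderiv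
      obtain ⟨q₁, hq₁⟩ := (dvd_iff_isRoot).mpr hqa
      refine ⟨(X - C a) ^ 2, ⟨q₁, by rw [hq, hq₁]; ring⟩, ?_, ?_, (X - C a), 0, by ring⟩
      · rw [natDegree_pow, natDegree_X_sub_C]
      · intro x
        simp only [eval_pow, eval_sub, eval_X, eval_C]
        positivity
    · -- no real root: find complex root z with im z ≠ 0
      push_neg at hroot
      have hdegpos : p.degree ≠ 0 := by
        have : 0 < p.natDegree := by omega
        exact (natDegree_pos_iff_degree_pos.mp this).ne'
      obtain ⟨z, hz⟩ := IsAlgClosed.exists_aeval_eq_zero ℂ p hdegpos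
      have him : z.im ≠ 0 := by
        intro h
        lift z to ℝ using h
        erw [aeval_ofReal, Complex.ofReal_eq_zero] at hz
        exact hroot z hz
      have hdvd := p.quadratic_dvd_of_aeval_eq_zero_im_ne_zero hz him
      have hform : X ^ 2 - C (2 * z.re) * X + C (‖z‖ ^ 2) =
          (X - C z.re) ^ 2 + (C z.im) ^ 2 := by
        have hn : ‖z‖ ^ 2 = z.re ^ 2 + z.im ^ 2 := by
          rw [Complex.sq_norm, Complex.normSq_apply]; ring
        rw [hn]
        simp only [map_add, map_mul, map_pow, map_ofNat]
        ring
      refine ⟨X ^ 2 - C (2 * z.re) * X + C (‖z‖ ^ 2), hdvd, ?_, ?_, (X - C z.re), C z.im,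
        hform⟩
      · compute_degree!
      · intro x
        rw [hform]
        simp only [eval_add, eval_pow, eval_sub, eval_X, eval_C]
        have : (0:ℝ) < z.im ^ 2 := by positivity
        nlinarith [sq_nonneg (x - z.re)]
  obtain ⟨s, hdvd, hsdeg, hsnonneg, u, v, hsuv⟩ := key
  obtain ⟨t, rfl⟩ := hdvd
  have hs0 : s ≠ 0 := by
    intro h; rw [h] at hsdeg; simp at hsdeg
  have ht0 : t ≠ 0 := by
    intro h; rw [h, mul_zero] at hp0; exact hp0 rfl
  have hmul : (s * t).natDegree = s.natDegree + t.natDegree := natDegree_mul hs0 ht0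
  have htdeg : t.natDegree = n - 2 := by omega
  have htlt : n - 2 < n := by omega
  have hteven : Even (n - 2) := by
    rcases heven with ⟨k, hk⟩
    exact ⟨k - 1, by omega⟩
  have htnonneg := nonneg_quot s t hs0 hsnonneg hpos
  obtain ⟨q, r, hqr⟩ := ih (n - 2) htlt t htdeg hteven htnonneg
  exact ⟨u * q - v * r, u * r + v * q, by rw [hqr, hsuv]; ring⟩

theorem nonneg_iff_sos_of_even_degree (p : Polynomial ℝ) (hdeg : Even p.natDegree) :
    (∀ x : ℝ, 0 ≤ p.eval x) ↔
      ∃ (n : ℕ) (q : Fin n → Polynomial ℝ), p = ∑ i, (q i) ^ 2 := by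
  constructor
  · intro hpos
    obtain ⟨q, r, hqr⟩ := aux_sos p.natDegree p rfl hdeg hpos
    exact ⟨2, ![q, r], by simp [hqr, Fin.sum_univ_two]⟩
  · rintro ⟨n, q, rfl⟩ x
    rw [eval_finset_sum]
    apply Finset.sum_nonneg
    intro i _
    rw [eval_pow]
    positivity
end

section
/- The Motzkin polynomial 1 + x₁²x₂⁴ + x₁⁴x₂² − 3x₁²x₂² is not a sum of squares of real polynomials. -/
open MvPolynomial

noncomputable def Mz : MvPolynomial (Fin 2) ℝ :=
  1 + X 0 ^ 2 * X 1 ^ 4 + X 0 ^ 4 * X 1 ^ 2 - 3 * X 0 ^ 2 * X 1 ^ 2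

lemma rsum_sq {n : ℕ} (f : Fin n → ℝ) (h : ∑ i, f i ^ 2 = 0) (i : Fin n) : f i = 0 := by
  have := (Finset.sum_eq_zero_iff_of_nonneg (fun j _ => sq_nonneg (f j))).mp h i (Finset.mem_univ i)
  exact (pow_eq_zero_iff two_ne_zero).mp this

lemma mv_sum_sq_eq_zero {n : ℕ} {f : Fin n → MvPolynomial (Fin 1) ℝ}
    (h : ∑ i, f i ^ 2 = 0) (i : Fin n) : f i = 0 := by
  apply MvPolynomial.funext (q := 0)
  intro x
  have hx := congrArg (eval x) h
  simp only [map_sum, map_pow, map_zero] at hx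
  simpa using rsum_sq _ hx i

noncomputable def mn (a b : ℕ) : Fin 2 →₀ ℕ := Finsupp.single 0 a + Finsupp.single 1 b

@[simp] lemma mn_apply0 (a b : ℕ) : mn a b 0 = a := by
  simp [mn, Finsupp.single_apply]

@[simp] lemma mn_apply1 (a b : ℕ) : mn a b 1 = b := by
  simp [mn, Finsupp.single_apply]

lemma eq_mn {u : Fin 2 →₀ ℕ} {a b : ℕ} (h0 : u 0 = a) (h1 : u 1 = b) : u = mn a b := by
  ext j
  fin_cases j
  · simpa using h0
  · simpa using h1

@[simp] lemma mn_eq_iff {a b c d : ℕ} : mn a b = mn c d ↔ a = c ∧ b = d := by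
  constructor
  · intro h
    exact ⟨by rw [← mn_apply0 a b, h, mn_apply0], by rw [← mn_apply1 a b, h, mn_apply1]⟩
  · rintro ⟨rfl, rfl⟩; rfl

lemma coeff_sq_of (p : MvPolynomial (Fin 2) ℝ) (m h : Fin 2 →₀ ℕ) (hm : h + h = m)
    (H : ∀ u v : Fin 2 →₀ ℕ, u + v = m → u ≠ h → coeff u p * coeff v p = 0) :
    coeff m (p ^ 2) = coeff h p ^ 2 := by
  rw [sq, MvPolynomial.coeff_mul, Finset.sum_eq_single (h, h)]
  · rw [sq]
  · rintro ⟨u, v⟩ huv hne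
    rw [Finset.HasAntidiagonal.mem_antidiagonal] at huv
    by_cases hu : u = h
    · have hv : v = h := by
        rw [hu] at huv
        exact add_left_cancel (huv.trans hm.symm)
      exact absurd (by rw [hu, hv]) hne
    · exact H u v huv hu
  · intro hmem
    exact absurd (Finset.HasAntidiagonal.mem_antidiagonal.mpr hm) hmem

lemma X_one_eq : (X 1 : MvPolynomial (Fin 2) ℝ) = X (Fin.succ 0) := rfl

lemma finSuccEquiv_Mz :
    MvPolynomial.finSuccEquiv ℝ 1 Mz =
      1 + Polynomial.X ^ 2 * Polynomial.C (X 0) ^ 4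
        + Polynomial.X ^ 4 * Polynomial.C (X 0) ^ 2
        - Polynomial.C (C 3) * Polynomial.X ^ 2 * Polynomial.C (X 0) ^ 2 := by
  have h3 : (3 : MvPolynomial (Fin 2) ℝ) = C 3 := (map_ofNat C 3).symm
  rw [Mz, X_one_eq, h3]
  simp only [map_add, map_sub, map_mul, map_pow, map_one,
    finSuccEquiv_X_zero, finSuccEquiv_X_succ]
  have : MvPolynomial.finSuccEquiv ℝ 1 (C 3) = Polynomial.C (C 3) := by
    simp [finSuccEquiv_apply]
  rw [this]

lemma finSuccEquiv_Mz_coeff {k : ℕ} (hk : 5 ≤ k) :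
    (MvPolynomial.finSuccEquiv ℝ 1 Mz).coeff k = 0 := by
  apply Polynomial.coeff_eq_zero_of_natDegree_lt
  rw [finSuccEquiv_Mz]
  have : (1 + Polynomial.X ^ 2 * Polynomial.C (X 0 : MvPolynomial (Fin 1) ℝ) ^ 4
        + Polynomial.X ^ 4 * Polynomial.C (X 0) ^ 2
        - Polynomial.C (C 3) * Polynomial.X ^ 2 * Polynomial.C (X 0) ^ 2).natDegree ≤ 4 := by
    compute_degree
  omega

lemma degreeOf_le_of_sos {n : ℕ} {q : Fin n → MvPolynomial (Fin 2) ℝ}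
    {P : MvPolynomial (Fin 2) ℝ} (hP : P = ∑ i, q i ^ 2)
    (hdeg : ∀ k, 5 ≤ k → (MvPolynomial.finSuccEquiv ℝ 1 P).coeff k = 0)
    (i : Fin n) : degreeOf 0 (q i) ≤ 2 := by
  set F : Fin n → Polynomial (MvPolynomial (Fin 1) ℝ) :=
    fun j => MvPolynomial.finSuccEquiv ℝ 1 (q j) with hFdef
  have hF : MvPolynomial.finSuccEquiv ℝ 1 P = ∑ j, F j ^ 2 := by
    rw [hP, map_sum]
    simp [hFdef, map_pow]
  rw [← natDegree_finSuccEquiv]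
  by_contra hlt
  push_neg at hlt
  set d := Finset.univ.sup fun j => (F j).natDegree with hd
  have hdi : (F i).natDegree ≤ d :=
    Finset.le_sup (f := fun j => (F j).natDegree) (Finset.mem_univ i)
  have hd3 : 3 ≤ d := le_trans hlt hdi
  obtain ⟨i₀, -, hi₀⟩ := Finset.exists_mem_eq_sup Finset.univ ⟨i, Finset.mem_univ i⟩
    (fun j => (F j).natDegree)
  have key : ∀ j, (F j ^ 2).coeff (2 * d) = ((F j).coeff d) ^ 2 := by
    intro j
    have hjd : (F j).natDegree ≤ d :=
      Finset.le_sup (f := fun j => (F j).natDegree) (Finset.mem_univ j)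
    rcases eq_or_lt_of_le hjd with he | hl
    · rw [sq, two_mul, ← he, Polynomial.coeff_mul_degree_add_degree,
        Polynomial.coeff_natDegree, sq]
    · have h1 : (F j ^ 2).natDegree < 2 * d := by
        have := Polynomial.natDegree_pow_le (p := F j) (n := 2)
        omega
      rw [Polynomial.coeff_eq_zero_of_natDegree_lt h1,
        Polynomial.coeff_eq_zero_of_natDegree_lt hl, zero_pow two_ne_zero]
  have hzero : ∑ j, ((F j).coeff d) ^ 2 = 0 := by
    have h1 := hdeg (2 * d) (by omega)
    rw [hF, Polynomial.finset_sum_coeff] at h1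
    rw [← h1]
    exact Finset.sum_congr rfl fun j _ => (key j).symm
  rw [← hd] at hi₀
  have h0 : (F i₀).coeff d = 0 := mv_sum_sq_eq_zero hzero i₀
  rw [hi₀, Polynomial.coeff_natDegree] at h0
  have hF0 : F i₀ = 0 := Polynomial.leadingCoeff_eq_zero.mp h0
  rw [hF0] at hi₀
  simp at hi₀
  omega

lemma rename_swap_Mz : rename (⇑(Equiv.swap (0 : Fin 2) 1)) Mz = Mz := by
  simp only [Mz, map_add, map_sub, map_mul, map_pow, map_one, map_ofNat, rename_X,
    Equiv.swap_apply_left, Equiv.swap_apply_right]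
  ring

lemma Mz_eq : Mz = monomial (mn 0 0) 1 + monomial (mn 2 4) 1
    + monomial (mn 4 2) 1 + monomial (mn 2 2) (-3) := by
  have h3 : (3 : MvPolynomial (Fin 2) ℝ) = C 3 := (map_ofNat C 3).symm
  rw [Mz, h3]
  rw [show (X 0 : MvPolynomial (Fin 2) ℝ) ^ 2 * X 1 ^ 4 = monomial (mn 2 4) 1 by
    rw [X_pow_eq_monomial, X_pow_eq_monomial, monomial_mul, one_mul]; rfl]
  rw [show (X 0 : MvPolynomial (Fin 2) ℝ) ^ 4 * X 1 ^ 2 = monomial (mn 4 2) 1 by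
    rw [X_pow_eq_monomial, X_pow_eq_monomial, monomial_mul, one_mul]; rfl]
  rw [show (C 3 : MvPolynomial (Fin 2) ℝ) * X 0 ^ 2 * X 1 ^ 2
      = monomial (mn 2 2) 3 by
    rw [X_pow_eq_monomial, X_pow_eq_monomial, C_mul_monomial, monomial_mul, mul_one, mul_one]; rfl]
  rw [show (1 : MvPolynomial (Fin 2) ℝ) = monomial (mn 0 0) 1 by
    rw [show mn 0 0 = 0 by simp [mn], monomial_zero', map_one]]
  rw [sub_eq_add_neg, ← map_neg]

open MvPolynomial in
theorem motzkin_not_sos :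
    ¬ ∃ (n : ℕ) (q : Fin n → MvPolynomial (Fin 2) ℝ),
        (1 + X 0 ^ 2 * X 1 ^ 4 + X 0 ^ 4 * X 1 ^ 2 - 3 * X 0 ^ 2 * X 1 ^ 2
          : MvPolynomial (Fin 2) ℝ) = ∑ i, (q i) ^ 2 := by
  rintro ⟨n, q, h⟩
  rw [show (1 + X 0 ^ 2 * X 1 ^ 4 + X 0 ^ 4 * X 1 ^ 2 - 3 * X 0 ^ 2 * X 1 ^ 2
      : MvPolynomial (Fin 2) ℝ) = Mz from rfl] at h
  -- degree bounds in each variable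
  have hx : ∀ i, degreeOf 0 (q i) ≤ 2 :=
    degreeOf_le_of_sos h (fun k hk => finSuccEquiv_Mz_coeff hk)
  have h2 : Mz = ∑ j, (rename (⇑(Equiv.swap (0 : Fin 2) 1)) (q j)) ^ 2 := by
    have hc := congrArg (rename (⇑(Equiv.swap (0 : Fin 2) 1))) h
    rw [rename_swap_Mz, map_sum] at hc
    simpa [map_pow] using hc
  have hy : ∀ i, degreeOf 1 (q i) ≤ 2 := by
    intro i
    have hb := degreeOf_le_of_sos h2 (fun k hk => finSuccEquiv_Mz_coeff hk) i
    have he := degreeOf_rename_of_injective (p := q i)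
      (Equiv.swap (0 : Fin 2) 1).injective (i := 1)
    rw [Equiv.swap_apply_right] at he
    rwa [he] at hb
  have hb : ∀ i (u : Fin 2 →₀ ℕ), coeff u (q i) ≠ 0 → u 0 ≤ 2 ∧ u 1 ≤ 2 := by
    intro i u hu
    have hm : u ∈ (q i).support := mem_support_iff.mpr hu
    exact ⟨le_trans (monomial_le_degreeOf 0 hm) (hx i),
      le_trans (monomial_le_degreeOf 1 hm) (hy i)⟩
  -- coefficient extraction
  have keyeq : ∀ (m hm : Fin 2 →₀ ℕ), hm + hm = m →
      (∀ i (u v : Fin 2 →₀ ℕ), u + v = m → u ≠ hm →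
        coeff u (q i) * coeff v (q i) = 0) →
      ∑ i, coeff hm (q i) ^ 2 = coeff m Mz := by
    intro m hm hsum H
    have hc := congrArg (coeff m) h
    rw [coeff_sum] at hc
    rw [hc]
    exact Finset.sum_congr rfl fun i _ => (coeff_sq_of (q i) m hm hsum (H i)).symm
  have pair_apply : ∀ (u v m : Fin 2 →₀ ℕ), u + v = m →
      u 0 + v 0 = m 0 ∧ u 1 + v 1 = m 1 := by
    intro u v m huv
    constructor
    · have := DFunLike.congr_fun huv (0 : Fin 2); simpa using this
    · have := DFunLike.congr_fun huv (1 : Fin 2); simpa using this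
  -- step 1 : coefficients at (2,0),(0,2),(2,2) vanish
  have z20 : ∀ i, coeff (mn 2 0) (q i) = 0 := by
    apply rsum_sq
    rw [keyeq (mn 4 0) (mn 2 0) (by ext j; fin_cases j <;> simp)]
    · simp [Mz_eq, coeff_monomial]
    · intro i u v huv hne
      rcases eq_or_ne (coeff u (q i)) 0 with h0 | h0
      · rw [h0, zero_mul]
      rcases eq_or_ne (coeff v (q i)) 0 with h1 | h1
      · rw [h1, mul_zero]
      obtain ⟨hu0, hu1⟩ := hb i u h0
      obtain ⟨hv0, hv1⟩ := hb i v h1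
      obtain ⟨e0, e1⟩ := pair_apply u v _ huv
      simp only [mn_apply0, mn_apply1] at e0 e1
      exact absurd (eq_mn (by omega) (by omega)) hne
  have z02 : ∀ i, coeff (mn 0 2) (q i) = 0 := by
    apply rsum_sq
    rw [keyeq (mn 0 4) (mn 0 2) (by ext j; fin_cases j <;> simp)]
    · simp [Mz_eq, coeff_monomial]
    · intro i u v huv hne
      rcases eq_or_ne (coeff u (q i)) 0 with h0 | h0
      · rw [h0, zero_mul]
      rcases eq_or_ne (coeff v (q i)) 0 with h1 | h1
      · rw [h1, mul_zero]
      obtain ⟨hu0, hu1⟩ := hb i u h0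
      obtain ⟨hv0, hv1⟩ := hb i v h1
      obtain ⟨e0, e1⟩ := pair_apply u v _ huv
      simp only [mn_apply0, mn_apply1] at e0 e1
      exact absurd (eq_mn (by omega) (by omega)) hne
  have z22 : ∀ i, coeff (mn 2 2) (q i) = 0 := by
    apply rsum_sq
    rw [keyeq (mn 4 4) (mn 2 2) (by ext j; fin_cases j <;> simp)]
    · simp [Mz_eq, coeff_monomial]
    · intro i u v huv hne
      rcases eq_or_ne (coeff u (q i)) 0 with h0 | h0
      · rw [h0, zero_mul]
      rcases eq_or_ne (coeff v (q i)) 0 with h1 | h1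
      · rw [h1, mul_zero]
      obtain ⟨hu0, hu1⟩ := hb i u h0
      obtain ⟨hv0, hv1⟩ := hb i v h1
      obtain ⟨e0, e1⟩ := pair_apply u v _ huv
      simp only [mn_apply0, mn_apply1] at e0 e1
      exact absurd (eq_mn (by omega) (by omega)) hne
  -- step 2 : coefficients at (1,0),(0,1) vanish
  have z10 : ∀ i, coeff (mn 1 0) (q i) = 0 := by
    apply rsum_sq
    rw [keyeq (mn 2 0) (mn 1 0) (by ext j; fin_cases j <;> simp)]
    · simp [Mz_eq, coeff_monomial]
    · intro i u v huv hne
      rcases eq_or_ne (coeff u (q i)) 0 with h0 | h0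
      · rw [h0, zero_mul]
      rcases eq_or_ne (coeff v (q i)) 0 with h1 | h1
      · rw [h1, mul_zero]
      exfalso
      obtain ⟨e0, e1⟩ := pair_apply u v _ huv
      simp only [mn_apply0, mn_apply1] at e0 e1
      have hu1 : u 1 = 0 := by omega
      have hv1 : v 1 = 0 := by omega
      have : u 0 = 0 ∨ u 0 = 1 ∨ u 0 = 2 := by
        obtain ⟨hu0, -⟩ := hb i u h0; omega
      rcases this with h' | h' | h'
      · exact h1 (by rw [eq_mn (show v 0 = 2 by omega) hv1]; exact z20 i)
      · exact hne (eq_mn h' hu1)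
      · exact h0 (by rw [eq_mn h' hu1]; exact z20 i)
  have z01 : ∀ i, coeff (mn 0 1) (q i) = 0 := by
    apply rsum_sq
    rw [keyeq (mn 0 2) (mn 0 1) (by ext j; fin_cases j <;> simp)]
    · simp [Mz_eq, coeff_monomial]
    · intro i u v huv hne
      rcases eq_or_ne (coeff u (q i)) 0 with h0 | h0
      · rw [h0, zero_mul]
      rcases eq_or_ne (coeff v (q i)) 0 with h1 | h1
      · rw [h1, mul_zero]
      exfalso
      obtain ⟨e0, e1⟩ := pair_apply u v _ huv
      simp only [mn_apply0, mn_apply1] at e0 e1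
      have hu0 : u 0 = 0 := by omega
      have hv0 : v 0 = 0 := by omega
      have : u 1 = 0 ∨ u 1 = 1 ∨ u 1 = 2 := by
        obtain ⟨-, hu1⟩ := hb i u h0; omega
      rcases this with h' | h' | h'
      · exact h1 (by rw [eq_mn hv0 (show v 1 = 2 by omega)]; exact z02 i)
      · exact hne (eq_mn hu0 h')
      · exact h0 (by rw [eq_mn hu0 h']; exact z02 i)
  -- final step : coefficient at (2,2)
  have final : ∑ i, coeff (mn 1 1) (q i) ^ 2 = coeff (mn 2 2) Mz := by
    apply keyeq (mn 2 2) (mn 1 1) (by ext j; fin_cases j <;> simp)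
    intro i u v huv hne
    rcases eq_or_ne (coeff u (q i)) 0 with h0 | h0
    · rw [h0, zero_mul]
    rcases eq_or_ne (coeff v (q i)) 0 with h1 | h1
    · rw [h1, mul_zero]
    exfalso
    obtain ⟨e0, e1⟩ := pair_apply u v _ huv
    simp only [mn_apply0, mn_apply1] at e0 e1
    have c0 : u 0 = 0 ∨ u 0 = 1 ∨ u 0 = 2 := by omega
    have c1 : u 1 = 0 ∨ u 1 = 1 ∨ u 1 = 2 := by omega
    rcases c0 with h' | h' | h' <;> rcases c1 with h'' | h'' | h''
    · exact h1 (by rw [eq_mn (show v 0 = 2 by omega) (show v 1 = 2 by omega)]; exact z22 i)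
    · exact h0 (by rw [eq_mn h' h'']; exact z01 i)
    · exact h0 (by rw [eq_mn h' h'']; exact z02 i)
    · exact h0 (by rw [eq_mn h' h'']; exact z10 i)
    · exact hne (eq_mn h' h'')
    · exact h1 (by rw [eq_mn (show v 0 = 1 by omega) (show v 1 = 0 by omega)]; exact z10 i)
    · exact h0 (by rw [eq_mn h' h'']; exact z20 i)
    · exact h1 (by rw [eq_mn (show v 0 = 0 by omega) (show v 1 = 1 by omega)]; exact z01 i)
    · exact h0 (by rw [eq_mn h' h'']; exact z22 i)
  have hcoeff : coeff (mn 2 2) Mz = -3 := by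
    simp [Mz_eq, coeff_monomial]
  rw [hcoeff] at final
  have hnonneg : (0 : ℝ) ≤ ∑ i, coeff (mn 1 1) (q i) ^ 2 :=
    Finset.sum_nonneg fun i _ => sq_nonneg _
  linarith
end

section
/- For all t ∈ [−1,1), the inequality (2/π)·arccos(t) ≥ α·(1 − t) holds with α = min over z ∈ [−1,1] of (2/π)·arccos(z)/(1−z); moreover α > 0.87. -/
open Real Set

private lemma aux_mono (f f' : ℝ → ℝ) (hd : ∀ x, HasDerivAt f (f' x) x)
    (h' : ∀ x, 0 ≤ x → 0 ≤ f' x) {x : ℝ} (hx : 0 ≤ x) : f 0 ≤ f x := by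
  have hmono : MonotoneOn f (Set.Ici 0) := by
    apply monotoneOn_of_deriv_nonneg (convex_Ici 0)
    · exact (continuous_iff_continuousAt.2 fun y => (hd y).continuousAt).continuousOn
    · exact fun y _ => (hd y).differentiableAt.differentiableWithinAt
    · intro y hy
      rw [interior_Ici] at hy
      rw [(hd y).deriv]
      exact h' y (le_of_lt hy)
  exact hmono Set.self_mem_Ici hx hx

private lemma sin_ge_cubic (x : ℝ) (hx : 0 ≤ x) : x - x ^ 3 / 6 ≤ Real.sin x := by
  have h := aux_mono (fun t => Real.sin t - (t - t ^ 3 / 6))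
    (fun t => Real.cos t - (1 - t ^ 2 / 2))
    (fun t => by
      have h1 : HasDerivAt (fun t : ℝ => Real.sin t - (t - t ^ 3 / 6))
          (Real.cos t - (1 - (3 : ℕ) * t ^ 2 / 6)) t := by
        exact (Real.hasDerivAt_sin t).sub ((hasDerivAt_id t).sub
          (((hasDerivAt_pow 3 t).div_const 6)))
      convert h1 using 1; push_cast; ring)
    (fun t _ => by nlinarith [Real.one_sub_sq_div_two_le_cos (x := t)]) hx
  simp at h
  linarith

private lemma cos_le_quartic (x : ℝ) (hx : 0 ≤ x) :
    Real.cos x ≤ 1 - x ^ 2 / 2 + x ^ 4 / 24 := by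
  have h := aux_mono (fun t => (1 - t ^ 2 / 2 + t ^ 4 / 24) - Real.cos t)
    (fun t => (-(t) + t ^ 3 / 6) + Real.sin t)
    (fun t => by
      have h1 : HasDerivAt (fun t : ℝ => (1 - t ^ 2 / 2 + t ^ 4 / 24) - Real.cos t)
          (((0 - (2 : ℕ) * t ^ 1 / 2) + (4 : ℕ) * t ^ 3 / 24) - (-Real.sin t)) t := by
        exact (((hasDerivAt_const t (1 : ℝ)).sub ((hasDerivAt_pow 2 t).div_const 2)).add
          ((hasDerivAt_pow 4 t).div_const 24)).sub (Real.hasDerivAt_cos t)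
      convert h1 using 1; push_cast; ring)
    (fun t ht => by nlinarith [sin_ge_cubic t ht]) hx
  simp at h
  linarith

private lemma sin_le_quintic (x : ℝ) (hx : 0 ≤ x) :
    Real.sin x ≤ x - x ^ 3 / 6 + x ^ 5 / 120 := by
  have h := aux_mono (fun t => (t - t ^ 3 / 6 + t ^ 5 / 120) - Real.sin t)
    (fun t => (1 - t ^ 2 / 2 + t ^ 4 / 24) - Real.cos t)
    (fun t => by
      have h1 : HasDerivAt (fun t : ℝ => (t - t ^ 3 / 6 + t ^ 5 / 120) - Real.sin t)
          (((1 - (3 : ℕ) * t ^ 2 / 6) + (5 : ℕ) * t ^ 4 / 120) - Real.cos t) t := by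
        exact (((hasDerivAt_id t).sub ((hasDerivAt_pow 3 t).div_const 6)).add
          ((hasDerivAt_pow 5 t).div_const 120)).sub (Real.hasDerivAt_sin t)
      convert h1 using 1; push_cast; ring)
    (fun t ht => by nlinarith [cos_le_quartic t ht]) hx
  simp at h
  linarith

private lemma key_sin_sq (u : ℝ) (h0 : 0 ≤ u) : 1367 * Real.sin u ^ 2 ≤ 1000 * u := by
  rcases le_or_gt u (1000 / 1367) with hu | hu
  · -- small u : sin u ≤ u
    have hs0 : 0 ≤ Real.sin u := Real.sin_nonneg_of_nonneg_of_le_pi h0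
      (by nlinarith [Real.pi_gt_d6])
    have hs : Real.sin u ≤ u := Real.sin_le h0
    nlinarith
  rcases le_or_gt (1367 / 1000) u with hu2 | hu2
  · -- large u : sin² ≤ 1
    nlinarith [Real.sin_sq_le_one u]
  · -- middle range
    have hs0 : 0 ≤ Real.sin u := Real.sin_nonneg_of_nonneg_of_le_pi h0
      (by nlinarith [Real.pi_gt_d6])
    have hs : Real.sin u ≤ u - u ^ 3 / 6 + u ^ 5 / 120 := sin_le_quintic u h0
    have hsq : Real.sin u ^ 2 ≤ (u - u ^ 3 / 6 + u ^ 5 / 120) ^ 2 := by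
      apply pow_le_pow_left₀ hs0 hs
    have hpoly : 1367 * (u - u ^ 3 / 6 + u ^ 5 / 120) ^ 2 ≤ 1000 * u := by
      nlinarith [sq_nonneg (u - 1.1656), sq_nonneg (u ^ 2 - 1.3585),
        mul_nonneg (sub_nonneg.2 hu.le) (sub_nonneg.2 hu2.le),
        sq_nonneg (u * (u - 1.1656)), sq_nonneg (u ^ 2 * (u - 1.1656)),
        sq_nonneg (u ^ 3 * (u - 1.1656)),
        mul_nonneg (mul_nonneg (sub_nonneg.2 hu.le) (sub_nonneg.2 hu2.le))
          (sq_nonneg (u - 1.1656))]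
    linarith

private lemma key_cos (θ : ℝ) (h0 : 0 ≤ θ) : 1367 * (1 - Real.cos θ) ≤ 1000 * θ := by
  have h1 : Real.cos θ = 1 - 2 * Real.sin (θ / 2) ^ 2 := by
    have h2 := Real.cos_two_mul (θ / 2)
    have h3 := Real.sin_sq_add_cos_sq (θ / 2)
    have : 2 * (θ / 2) = θ := by ring
    rw [this] at h2
    nlinarith
  have h4 := key_sin_sq (θ / 2) (by linarith)
  nlinarith

private lemma arccos_ge (z : ℝ) (hz : -1 ≤ z) (hz1 : z ≤ 1) :
    1367 / 1000 * (1 - z) ≤ Real.arccos z := by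
  have h0 : 0 ≤ Real.arccos z := Real.arccos_nonneg z
  have hc : Real.cos (Real.arccos z) = z := Real.cos_arccos hz hz1
  have := key_cos (Real.arccos z) h0
  rw [hc] at this
  linarith

theorem arccos_lower_bound
    (α : ℝ)
    (hα : α = sInf ((fun z : ℝ => (2 / Real.pi) * Real.arccos z / (1 - z)) ''
      Set.Ico (-1 : ℝ) 1)) :
    (∀ t ∈ Set.Ico (-1 : ℝ) 1, α * (1 - t) ≤ (2 / Real.pi) * Real.arccos t) ∧
      0.87 < α := by
  set f : ℝ → ℝ := fun z => (2 / Real.pi) * Real.arccos z / (1 - z) with hf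
  set c₀ : ℝ := (2 / Real.pi) * (1367 / 1000) with hc₀
  have hpi : (0 : ℝ) < Real.pi := Real.pi_pos
  have hlb : ∀ z ∈ Set.Ico (-1 : ℝ) 1, c₀ ≤ f z := by
    intro z hz
    obtain ⟨hz1, hz2⟩ := hz
    have h1z : (0 : ℝ) < 1 - z := by linarith
    have harc : 1367 / 1000 * (1 - z) ≤ Real.arccos z := arccos_ge z hz1 hz2.le
    rw [hf, hc₀]
    rw [le_div_iff₀ h1z]
    have h2pi : (0 : ℝ) < 2 / Real.pi := by positivity
    calc 2 / Real.pi * (1367 / 1000) * (1 - z)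
        = 2 / Real.pi * (1367 / 1000 * (1 - z)) := by ring
      _ ≤ 2 / Real.pi * Real.arccos z := by
          exact mul_le_mul_of_nonneg_left harc h2pi.le
  have hbdd : BddBelow (f '' Set.Ico (-1 : ℝ) 1) := by
    refine ⟨c₀, ?_⟩
    rintro y ⟨z, hz, rfl⟩
    exact hlb z hz
  have hne : (f '' Set.Ico (-1 : ℝ) 1).Nonempty := by
    refine ⟨f (-1), ⟨-1, ?_, rfl⟩⟩
    constructor <;> norm_num
  constructor
  · intro t ht
    have hαle : α ≤ f t := by
      rw [hα]
      exact csInf_le hbdd ⟨t, ht, rfl⟩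
    have h1t : (0 : ℝ) < 1 - t := by linarith [ht.2]
    have := mul_le_mul_of_nonneg_right hαle h1t.le
    calc α * (1 - t) ≤ f t * (1 - t) := this
      _ = (2 / Real.pi) * Real.arccos t := by
          rw [hf]
          field_simp
  · have hc₀le : c₀ ≤ α := by
      rw [hα]
      exact le_csInf hne (by rintro y ⟨z, hz, rfl⟩; exact hlb z hz)
    have h87 : (0.87 : ℝ) < c₀ := by
      rw [hc₀, div_mul_eq_mul_div, lt_div_iff₀ hpi]
      nlinarith [Real.pi_lt_d6]
    linarith
end
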